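/- Let α ≥ 0, λ > 0, and ν > 1, let f(x; λ, ν) be the GE density, and let u_ν(x) = 1/ν + log(1 − exp(−λx)) be the score function with respect to ν. Then ∫₀^∞ u_ν(x)² f(x; λ, ν)^(1+α) dx = λ^α ν^(α−1) B(1 + α, (1 + α)(ν − 1) + 1) { ν² (ψ'((1 + α)(ν − 1) + 1) − ψ'(ν(1 + α) + 1)) + (1 + ν (ψ((1 + α)(ν − 1) + 1) − ψ(ν(1 + α) + 1)))² }. -/

import Mathlib

open Real Set MeasureTheory

/-- The generalized exponential (GE) density with rate `l > 0` and shape `v > 0`. -/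
noncomputable def geDensity (l v x : ℝ) : ℝ :=
  l * v * Real.exp (-(l * x)) * (1 - Real.exp (-(l * x))) ^ (v - 1)

/-- The GE score function with respect to the shape parameter `ν`. -/
noncomputable def geScoreShape (l v x : ℝ) : ℝ :=
  1 / v + Real.log (1 - Real.exp (-(l * x)))

/-- The real Beta function `B(a, b) = Γ(a)Γ(b)/Γ(a+b)`. -/
noncomputable def realBeta (a b : ℝ) : ℝ :=
  Real.Gamma a * Real.Gamma b / Real.Gamma (a + b)

/-- The digamma function `ψ(x) = d/dx log Γ(x)`. -/
noncomputable def digamma : ℝ → ℝ := deriv fun x => Real.log (Real.Gamma x)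

/-- The trigamma function `ψ'`. -/
noncomputable def trigamma : ℝ → ℝ := deriv digamma

lemma realGamma_ne_neg_nat {x : ℝ} (hx : 0 < x) : ∀ m : ℕ, x ≠ -m := by
  intro m h
  have : (0:ℝ) ≤ (m:ℝ) := Nat.cast_nonneg m
  rw [h] at hx; linarith

lemma analyticAt_realGamma {x : ℝ} (hx : 0 < x) : AnalyticAt ℝ Real.Gamma x := by
  have hU : IsOpen {z : ℂ | 0 < z.re} := isOpen_lt continuous_const Complex.continuous_re
  have hd : DifferentiableOn ℂ Complex.Gamma {z : ℂ | 0 < z.re} := by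
    intro z hz
    refine (Complex.differentiableAt_Gamma z ?_).differentiableWithinAt
    intro m h
    rw [h] at hz
    simp only [mem_setOf_eq, Complex.neg_re, Complex.natCast_re] at hz
    have : (0:ℝ) ≤ (m:ℝ) := Nat.cast_nonneg m
    linarith
  have hA : AnalyticAt ℂ Complex.Gamma (x : ℂ) :=
    hd.analyticAt (hU.mem_nhds (by simpa using hx))
  have h1 : AnalyticAt ℝ (fun t : ℝ => Complex.Gamma ((t : ℂ))) x :=
    hA.restrictScalars.comp (Complex.ofRealCLM.analyticAt x)
  have h2 : AnalyticAt ℝ (fun t : ℝ => (Complex.Gamma ((t : ℂ))).re) x :=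
    (Complex.reCLM.analyticAt _).comp h1
  have he : (fun t : ℝ => (Complex.Gamma ((t : ℂ))).re) = Real.Gamma := by
    funext t; rw [Complex.Gamma_ofReal, Complex.ofReal_re]
  rwa [he] at h2

lemma hasDerivAt_logGamma {x : ℝ} (hx : 0 < x) :
    HasDerivAt (fun y => Real.log (Real.Gamma y)) (digamma x) x := by
  have hne : Real.Gamma x ≠ 0 := (Real.Gamma_pos_of_pos hx).ne'
  have hdiff : DifferentiableAt ℝ Real.Gamma x :=
    Real.differentiableAt_Gamma (realGamma_ne_neg_nat hx)
  have : DifferentiableAt ℝ (fun y => Real.log (Real.Gamma y)) x := hdiff.log hne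
  exact this.hasDerivAt

lemma hasDerivAt_realGamma {x : ℝ} (hx : 0 < x) :
    HasDerivAt Real.Gamma (Real.Gamma x * digamma x) x := by
  have hne : Real.Gamma x ≠ 0 := (Real.Gamma_pos_of_pos hx).ne'
  have hdiff : DifferentiableAt ℝ Real.Gamma x :=
    Real.differentiableAt_Gamma (realGamma_ne_neg_nat hx)
  have h1 : HasDerivAt (fun y => Real.log (Real.Gamma y))
      (deriv Real.Gamma x / Real.Gamma x) x := hdiff.hasDerivAt.log hne
  have h2 := (hasDerivAt_logGamma hx).unique h1
  have h3 : deriv Real.Gamma x = Real.Gamma x * digamma x := by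
    field_simp at h2; linarith
  exact h3 ▸ hdiff.hasDerivAt

lemma analyticAt_digamma {x : ℝ} (hx : 0 < x) : AnalyticAt ℝ digamma x := by
  have hA : AnalyticOnNhd ℝ Real.Gamma (Ioi (0:ℝ)) := fun y hy => analyticAt_realGamma hy
  have hA' : AnalyticOnNhd ℝ (deriv Real.Gamma) (Ioi (0:ℝ)) := hA.deriv
  have hg : AnalyticAt ℝ (fun y => deriv Real.Gamma y / Real.Gamma y) x :=
    (hA' x hx).div (hA x hx) (Real.Gamma_pos_of_pos hx).ne'
  refine hg.congr ?_
  filter_upwards [Ioi_mem_nhds hx] with y hy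
  have hne : Real.Gamma y ≠ 0 := (Real.Gamma_pos_of_pos hy).ne'
  have hdiff : DifferentiableAt ℝ Real.Gamma y :=
    Real.differentiableAt_Gamma (realGamma_ne_neg_nat hy)
  exact ((hdiff.hasDerivAt.log hne).deriv).symm

lemma hasDerivAt_digamma {x : ℝ} (hx : 0 < x) : HasDerivAt digamma (trigamma x) x :=
  (analyticAt_digamma hx).differentiableAt.hasDerivAt

lemma hasDerivAt_realBeta {p q : ℝ} (hp : 0 < p) (hq : 0 < q) :
    HasDerivAt (fun y => realBeta p y)
      (realBeta p q * (digamma q - digamma (p + q))) q := by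
  have hpq : 0 < p + q := by linarith
  have hne : Real.Gamma (p + q) ≠ 0 := (Real.Gamma_pos_of_pos hpq).ne'
  have h1 : HasDerivAt (fun y => Real.Gamma p * Real.Gamma y)
      (Real.Gamma p * (Real.Gamma q * digamma q)) q :=
    (hasDerivAt_realGamma hq).const_mul _
  have h2 : HasDerivAt (fun y => Real.Gamma (p + y))
      (Real.Gamma (p + q) * digamma (p + q)) q := by
    have := (hasDerivAt_realGamma hpq).comp q ((hasDerivAt_id q).const_add p)
    simpa [Function.comp_def] using this
  have h3 := h1.div h2 hne
  have : (Real.Gamma p * (Real.Gamma q * digamma q) * Real.Gamma (p + q) -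
        Real.Gamma p * Real.Gamma q * (Real.Gamma (p + q) * digamma (p + q))) /
        Real.Gamma (p + q) ^ 2 =
      realBeta p q * (digamma q - digamma (p + q)) := by
    rw [realBeta]; field_simp
  rw [this] at h3
  exact h3.congr_deriv rfl

lemma hasDerivAt_realBeta_mul {p q : ℝ} (hp : 0 < p) (hq : 0 < q) :
    HasDerivAt (fun y => realBeta p y * (digamma y - digamma (p + y)))
      (realBeta p q * ((digamma q - digamma (p + q)) ^ 2 +
        (trigamma q - trigamma (p + q)))) q := by
  have hpq : 0 < p + q := by linarith
  have hD : HasDerivAt (fun y => digamma y - digamma (p + y))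
      (trigamma q - trigamma (p + q)) q := by
    refine (hasDerivAt_digamma hq).sub ?_
    have := (hasDerivAt_digamma hpq).comp q ((hasDerivAt_id q).const_add p)
    simpa [Function.comp_def] using this
  have h := (hasDerivAt_realBeta hp hq).mul hD
  exact h.congr_deriv (by ring)

lemma integrableOn_beta {p q : ℝ} (hp : 0 < p) (hq : 0 < q) :
    IntegrableOn (fun u : ℝ => u ^ (p - 1) * (1 - u) ^ (q - 1)) (Ioo (0:ℝ) 1) := by
  have h := Complex.betaIntegral_convergent (u := (p : ℂ)) (v := (q : ℂ))
    (by simpa using hp) (by simpa using hq)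
  have h2 : IntegrableOn (fun x : ℝ => (x : ℂ) ^ ((p : ℂ) - 1) * ((1 : ℂ) - x) ^ ((q : ℂ) - 1))
      (Ioo (0:ℝ) 1) := h.1.mono_set Ioo_subset_Ioc_self
  have h3 := h2.re
  refine (IntegrableOn.congr_fun h3 ?_ measurableSet_Ioo)
  intro x hx
  obtain ⟨hx0, hx1⟩ := hx
  have e1 : ((x : ℂ)) ^ ((p : ℂ) - 1) = ((x ^ (p - 1) : ℝ) : ℂ) := by
    rw [Complex.ofReal_cpow hx0.le]; push_cast; ring_nf
  have e2 : ((1 : ℂ) - (x : ℂ)) ^ ((q : ℂ) - 1) = (((1 - x) ^ (q - 1) : ℝ) : ℂ) := by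
    rw [show ((1:ℂ) - (x:ℂ)) = (((1 - x : ℝ)) : ℂ) by push_cast; ring,
      Complex.ofReal_cpow (by linarith)]
    push_cast; ring_nf
  simp [e1, e2, ← Complex.ofReal_mul]

lemma abs_log_le_rpow {t δ : ℝ} (ht0 : 0 < t) (ht1 : t ≤ 1) (hδ : 0 < δ) :
    |Real.log t| ≤ t ^ (-δ) / δ := by
  have hlog : Real.log t ≤ 0 := Real.log_nonpos ht0.le ht1
  rw [abs_of_nonpos hlog]
  have hinv : (1:ℝ) ≤ t⁻¹ := (one_le_inv_iff₀).2 ⟨ht0, ht1⟩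
  have h1 : Real.log (t⁻¹ ^ δ) ≤ t⁻¹ ^ δ - 1 :=
    Real.log_le_sub_one_of_pos (Real.rpow_pos_of_pos (by positivity) δ)
  rw [Real.log_rpow (by positivity), Real.log_inv] at h1
  have h2 : t⁻¹ ^ δ = t ^ (-δ) := by
    rw [Real.inv_rpow ht0.le, ← Real.rpow_neg ht0.le]
  rw [h2] at h1
  rw [le_div_iff₀ hδ]
  nlinarith [Real.rpow_pos_of_pos ht0 (-δ)]

lemma integrable_absLog {p q : ℝ} (hp : 0 < p) (hq : 0 < q) (k : ℕ) :
    IntegrableOn (fun u : ℝ => u ^ (p - 1) * (1 - u) ^ (q - 1) * |Real.log (1 - u)| ^ k)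
      (Ioo (0:ℝ) 1) := by
  set δ : ℝ := q / (2 * (k + 1)) with hδdef
  have hδ : 0 < δ := by positivity
  have hδk : δ * k ≤ q / 2 := by
    rw [hδdef, div_mul_eq_mul_div, div_le_div_iff₀ (by positivity) (by norm_num)]
    have : (k : ℝ) ≤ k + 1 := by linarith
    nlinarith [hq.le, Nat.cast_nonneg (α := ℝ) k]
  have hmeas : AEStronglyMeasurable
      (fun u : ℝ => u ^ (p - 1) * (1 - u) ^ (q - 1) * |Real.log (1 - u)| ^ k)
      (volume.restrict (Ioo (0:ℝ) 1)) := by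
    apply Measurable.aestronglyMeasurable
    have h1 : Measurable (fun u : ℝ => u ^ (p-1)) := by fun_prop
    have h2 : Measurable (fun u : ℝ => (1-u) ^ (q-1)) := by fun_prop
    have h3 : Measurable (fun u : ℝ => |Real.log (1-u)|^k) :=
      ((Real.measurable_log.comp (measurable_const.sub measurable_id)).abs).pow_const k
    exact (h1.mul h2).mul h3
  have hB : IntegrableOn (fun u : ℝ => (1/δ)^k * (u ^ (p - 1) * (1 - u) ^ (q/2 - 1)))
      (Ioo (0:ℝ) 1) := (integrableOn_beta hp (by positivity)).const_mul _
  refine hB.mono' hmeas ?_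
  filter_upwards [ae_restrict_mem measurableSet_Ioo] with u hu
  obtain ⟨hu0, hu1⟩ := hu
  have ht0 : 0 < 1 - u := by linarith
  have ht1 : 1 - u ≤ 1 := by linarith
  have hup : 0 ≤ u ^ (p - 1) := Real.rpow_nonneg hu0.le _
  have htq : 0 ≤ (1 - u) ^ (q - 1) := Real.rpow_nonneg ht0.le _
  rw [Real.norm_eq_abs, abs_of_nonneg (by positivity)]
  have hlog : |Real.log (1 - u)| ^ k ≤ ((1 - u) ^ (-δ) / δ) ^ k :=
    pow_le_pow_left₀ (abs_nonneg _) (abs_log_le_rpow ht0 ht1 hδ) k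
  have h1 : (1 - u) ^ (q - 1) * ((1 - u) ^ (-δ) / δ) ^ k
      ≤ (1/δ)^k * (1 - u) ^ (q/2 - 1) := by
    rw [div_pow, ← Real.rpow_natCast ((1-u) ^ (-δ)) k, ← Real.rpow_mul ht0.le]
    rw [div_eq_mul_inv, ← mul_assoc, ← Real.rpow_add ht0]
    have hexp : q / 2 - 1 ≤ q - 1 + -δ * k := by
      have : -δ * k ≥ -(q/2) := by nlinarith
      linarith
    calc (1 - u) ^ (q - 1 + -δ * ↑k) * (δ ^ k)⁻¹
        ≤ (1 - u) ^ (q/2 - 1) * (δ ^ k)⁻¹ := by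
          apply mul_le_mul_of_nonneg_right
            (Real.rpow_le_rpow_of_exponent_ge ht0 ht1 hexp) (by positivity)
      _ = (1/δ)^k * (1 - u) ^ (q/2 - 1) := by rw [one_div, inv_pow]; ring
  calc u ^ (p - 1) * (1 - u) ^ (q - 1) * |Real.log (1 - u)| ^ k
      ≤ u ^ (p - 1) * ((1 - u) ^ (q - 1) * ((1 - u) ^ (-δ) / δ) ^ k) := by
        rw [mul_assoc]
        exact mul_le_mul_of_nonneg_left (mul_le_mul_of_nonneg_left hlog htq) hup
    _ ≤ u ^ (p - 1) * ((1/δ)^k * (1 - u) ^ (q/2 - 1)) :=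
        mul_le_mul_of_nonneg_left h1 hup
    _ = (1/δ)^k * (u ^ (p - 1) * (1 - u) ^ (q/2 - 1)) := by ring

lemma integrable_logpow {p q : ℝ} (hp : 0 < p) (hq : 0 < q) (k : ℕ) :
    IntegrableOn (fun u : ℝ => u ^ (p - 1) * (1 - u) ^ (q - 1) * Real.log (1 - u) ^ k)
      (Ioo (0:ℝ) 1) := by
  refine (integrable_absLog hp hq k).mono' ?_ ?_
  · apply Measurable.aestronglyMeasurable
    have h1 : Measurable (fun u : ℝ => u ^ (p-1)) := by fun_prop
    have h2 : Measurable (fun u : ℝ => (1-u) ^ (q-1)) := by fun_prop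
    have h3 : Measurable (fun u : ℝ => Real.log (1-u)^k) :=
      ((Real.measurable_log.comp (measurable_const.sub measurable_id))).pow_const k
    exact (h1.mul h2).mul h3
  · filter_upwards [ae_restrict_mem measurableSet_Ioo] with u hu
    obtain ⟨hu0, hu1⟩ := hu
    have ht0 : (0:ℝ) < 1 - u := by linarith
    rw [Real.norm_eq_abs, abs_mul, abs_pow,
      abs_of_nonneg (by positivity : (0:ℝ) ≤ u ^ (p-1) * (1-u)^(q-1))]

lemma integral_beta_eq {p q : ℝ} (hp : 0 < p) (hq : 0 < q) :
    ∫ u in Ioo (0:ℝ) 1, u ^ (p - 1) * (1 - u) ^ (q - 1) = realBeta p q := by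
  have key := Complex.Gamma_mul_Gamma_eq_betaIntegral (s := (p:ℂ)) (t := (q:ℂ))
    (by simpa using hp) (by simpa using hq)
  have hpq : 0 < p + q := by linarith
  have hne : Real.Gamma (p + q) ≠ 0 := (Real.Gamma_pos_of_pos hpq).ne'
  have hbeta : Complex.betaIntegral (p:ℂ) (q:ℂ) =
      ((∫ u in Ioo (0:ℝ) 1, u ^ (p - 1) * (1 - u) ^ (q - 1) : ℝ) : ℂ) := by
    rw [Complex.betaIntegral, intervalIntegral.integral_of_le zero_le_one,
      integral_Ioc_eq_integral_Ioo]
    rw [setIntegral_congr_fun measurableSet_Ioo (g := fun x : ℝ =>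
        ((x ^ (p - 1) * (1 - x) ^ (q - 1) : ℝ) : ℂ)) ?_]
    · exact integral_ofReal (𝕜 := ℂ)
    · intro x hx
      obtain ⟨hx0, hx1⟩ := hx
      have e1 : ((x : ℂ)) ^ ((p : ℂ) - 1) = ((x ^ (p - 1) : ℝ) : ℂ) := by
        rw [Complex.ofReal_cpow hx0.le]; push_cast; ring_nf
      have e2 : ((1 : ℂ) - (x : ℂ)) ^ ((q : ℂ) - 1) = (((1 - x) ^ (q - 1) : ℝ) : ℂ) := by
        rw [show ((1:ℂ) - (x:ℂ)) = (((1 - x : ℝ)) : ℂ) by push_cast; ring,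
          Complex.ofReal_cpow (by linarith)]
        push_cast; ring_nf
      simp [e1, e2, ← Complex.ofReal_mul]
  rw [hbeta] at key
  rw [show ((p:ℂ) + (q:ℂ)) = ((p + q : ℝ) : ℂ) by push_cast; ring] at key
  rw [Complex.Gamma_ofReal, Complex.Gamma_ofReal, Complex.Gamma_ofReal,
    ← Complex.ofReal_mul, ← Complex.ofReal_mul] at key
  have key2 : Real.Gamma p * Real.Gamma q =
      Real.Gamma (p + q) * ∫ u in Ioo (0:ℝ) 1, u ^ (p - 1) * (1 - u) ^ (q - 1) := by
    exact_mod_cast key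
  rw [realBeta, key2]
  field_simp

lemma hasDerivAt_J {p : ℝ} (hp : 0 < p) {q : ℝ} (hq : 0 < q) (k : ℕ) :
    HasDerivAt (fun y => ∫ u in Ioo (0:ℝ) 1,
        u ^ (p - 1) * (1 - u) ^ (y - 1) * Real.log (1 - u) ^ k)
      (∫ u in Ioo (0:ℝ) 1,
        u ^ (p - 1) * (1 - u) ^ (q - 1) * Real.log (1 - u) ^ (k + 1)) q := by
  set μ := volume.restrict (Ioo (0:ℝ) 1)
  have hmeas : ∀ y : ℝ, AEStronglyMeasurable
      (fun u : ℝ => u ^ (p - 1) * (1 - u) ^ (y - 1) * Real.log (1 - u) ^ k) μ := by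
    intro y
    apply Measurable.aestronglyMeasurable
    have h1 : Measurable (fun u : ℝ => u ^ (p-1)) := by fun_prop
    have h2 : Measurable (fun u : ℝ => (1-u) ^ (y-1)) := by fun_prop
    have h3 : Measurable (fun u : ℝ => Real.log (1-u)^k) :=
      ((Real.measurable_log.comp (measurable_const.sub measurable_id))).pow_const k
    exact (h1.mul h2).mul h3
  have hmeas' : AEStronglyMeasurable
      (fun u : ℝ => u ^ (p - 1) * (1 - u) ^ (q - 1) * Real.log (1 - u) ^ (k+1)) μ := by
    apply Measurable.aestronglyMeasurable
    have h1 : Measurable (fun u : ℝ => u ^ (p-1)) := by fun_prop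
    have h2 : Measurable (fun u : ℝ => (1-u) ^ (q-1)) := by fun_prop
    have h3 : Measurable (fun u : ℝ => Real.log (1-u)^(k+1)) :=
      ((Real.measurable_log.comp (measurable_const.sub measurable_id))).pow_const (k+1)
    exact (h1.mul h2).mul h3
  have hεq : (0:ℝ) < q/2 := by positivity
  have main := hasDerivAt_integral_of_dominated_loc_of_deriv_le (μ := μ)
    (F := fun y u => u ^ (p - 1) * (1 - u) ^ (y - 1) * Real.log (1 - u) ^ k)
    (F' := fun y u => u ^ (p - 1) * (1 - u) ^ (y - 1) * Real.log (1 - u) ^ (k + 1))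
    (x₀ := q)
    (bound := fun u => u ^ (p - 1) * (1 - u) ^ (q/2 - 1) * |Real.log (1 - u)| ^ (k + 1))
    (Metric.ball_mem_nhds q hεq)
    (Filter.Eventually.of_forall fun y => hmeas y)
    (integrable_logpow hp hq k)
    hmeas'
    ?_ (integrable_absLog hp hεq (k + 1)) ?_
  · exact main.2
  · filter_upwards [ae_restrict_mem measurableSet_Ioo] with u hu
    intro y hy
    obtain ⟨hu0, hu1⟩ := hu
    have ht0 : (0:ℝ) < 1 - u := by linarith
    have ht1 : (1:ℝ) - u ≤ 1 := by linarith
    rw [Metric.mem_ball, Real.dist_eq] at hy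
    have hy2 : q/2 - 1 ≤ y - 1 := by
      cases' abs_lt.1 hy with h1 h2; linarith
    rw [Real.norm_eq_abs, abs_mul, abs_mul, abs_pow,
      abs_of_nonneg (Real.rpow_nonneg hu0.le _),
      abs_of_nonneg (Real.rpow_nonneg ht0.le _)]
    have h := Real.rpow_le_rpow_of_exponent_ge ht0 ht1 hy2
    gcongr
  · filter_upwards [ae_restrict_mem measurableSet_Ioo] with u hu
    intro y hy
    obtain ⟨hu0, hu1⟩ := hu
    have ht0 : (0:ℝ) < 1 - u := by linarith
    have hd : HasDerivAt (fun y : ℝ => (1 - u) ^ (y - 1))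
        ((1 - u) ^ (y - 1) * Real.log (1 - u)) y := by
      have h := ((Real.hasStrictDerivAt_const_rpow ht0 (y - 1)).hasDerivAt).comp y
        ((hasDerivAt_id y).sub_const 1)
      simpa [Function.comp_def] using h
    have h2 := (hd.const_mul (u ^ (p - 1))).mul_const (Real.log (1 - u) ^ k)
    exact h2.congr_deriv (by ring)

lemma J0_eq {p q : ℝ} (hp : 0 < p) (hq : 0 < q) :
    ∫ u in Ioo (0:ℝ) 1, u ^ (p - 1) * (1 - u) ^ (q - 1) * Real.log (1 - u) ^ 0
      = realBeta p q := by
  simp only [pow_zero, mul_one]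
  exact integral_beta_eq hp hq

lemma J1_eq {p q : ℝ} (hp : 0 < p) (hq : 0 < q) :
    ∫ u in Ioo (0:ℝ) 1, u ^ (p - 1) * (1 - u) ^ (q - 1) * Real.log (1 - u) ^ 1
      = realBeta p q * (digamma q - digamma (p + q)) := by
  have hJ := hasDerivAt_J hp hq 0
  have heq : (fun y => ∫ u in Ioo (0:ℝ) 1,
      u ^ (p - 1) * (1 - u) ^ (y - 1) * Real.log (1 - u) ^ 0)
      =ᶠ[nhds q] (fun y => realBeta p y) := by
    filter_upwards [Ioi_mem_nhds hq] with y hy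
    exact J0_eq hp hy
  have hJ' : HasDerivAt (fun y => realBeta p y)
      (∫ u in Ioo (0:ℝ) 1, u ^ (p - 1) * (1 - u) ^ (q - 1) * Real.log (1 - u) ^ (0 + 1)) q :=
    hJ.congr_of_eventuallyEq heq.symm
  exact hJ'.unique (hasDerivAt_realBeta hp hq)

lemma J2_eq {p q : ℝ} (hp : 0 < p) (hq : 0 < q) :
    ∫ u in Ioo (0:ℝ) 1, u ^ (p - 1) * (1 - u) ^ (q - 1) * Real.log (1 - u) ^ 2
      = realBeta p q * ((digamma q - digamma (p + q)) ^ 2 +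
        (trigamma q - trigamma (p + q))) := by
  have hJ := hasDerivAt_J hp hq 1
  have heq : (fun y => ∫ u in Ioo (0:ℝ) 1,
      u ^ (p - 1) * (1 - u) ^ (y - 1) * Real.log (1 - u) ^ 1)
      =ᶠ[nhds q] (fun y => realBeta p y * (digamma y - digamma (p + y))) := by
    filter_upwards [Ioi_mem_nhds hq] with y hy
    exact J1_eq hp hy
  have hJ' : HasDerivAt (fun y => realBeta p y * (digamma y - digamma (p + y)))
      (∫ u in Ioo (0:ℝ) 1, u ^ (p - 1) * (1 - u) ^ (q - 1) * Real.log (1 - u) ^ (1 + 1)) q :=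
    hJ.congr_of_eventuallyEq heq.symm
  exact hJ'.unique (hasDerivAt_realBeta_mul hp hq)

lemma image_exp_Ioi {l : ℝ} (hl : 0 < l) :
    (fun x : ℝ => Real.exp (-(l * x))) '' Ioi 0 = Ioo (0:ℝ) 1 := by
  ext u
  constructor
  · rintro ⟨x, hx, rfl⟩
    have hx0 : (0:ℝ) < x := hx
    refine ⟨Real.exp_pos _, ?_⟩
    rw [← Real.exp_zero]
    exact Real.exp_lt_exp.2 (by nlinarith)
  · rintro ⟨hu0, hu1⟩
    have hlog : Real.log u < 0 := Real.log_neg hu0 hu1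
    refine ⟨-(Real.log u)/l, ?_, ?_⟩
    · exact div_pos (by linarith) hl
    · show Real.exp (-(l * (-Real.log u / l))) = u
      rw [show -(l * (-Real.log u / l)) = Real.log u by field_simp]
      exact Real.exp_log hu0

lemma subst_step (a l v : ℝ) (ha : 0 ≤ a) (hl : 0 < l) (hv : 1 < v) :
    ∫ x in Ioi (0:ℝ), geScoreShape l v x ^ 2 * geDensity l v x ^ (1 + a) =
    ∫ u in Ioo (0:ℝ) 1, l ^ a * v ^ (1 + a) *
      ((1/v + Real.log (1 - u)) ^ 2 *
        (u ^ ((1 + a) - 1) * (1 - u) ^ (((1 + a) * (v - 1) + 1) - 1))) := by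
  set g : ℝ → ℝ := fun u => l ^ a * v ^ (1 + a) *
      ((1/v + Real.log (1 - u)) ^ 2 *
        (u ^ ((1 + a) - 1) * (1 - u) ^ (((1 + a) * (v - 1) + 1) - 1))) with hg
  have hderiv : ∀ x ∈ Ioi (0:ℝ), HasDerivWithinAt (fun x : ℝ => Real.exp (-(l * x)))
      (Real.exp (-(l * x)) * -l) (Ioi 0) x := by
    intro x _
    have h1 : HasDerivAt (fun x : ℝ => -(l * x)) (-l) x := by
      exact ((hasDerivAt_id' x).const_mul l).neg.congr_deriv (by ring)
    exact ((Real.hasDerivAt_exp (-(l * x))).comp x h1).hasDerivWithinAt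
  have hinj : InjOn (fun x : ℝ => Real.exp (-(l * x))) (Ioi 0) := by
    intro x _ y _ h
    have h2 : -(l * x) = -(l * y) := Real.exp_injective h
    have := mul_left_cancel₀ hl.ne' (by linarith : l * x = l * y)
    exact this
  have key := integral_image_eq_integral_abs_deriv_smul measurableSet_Ioi hderiv hinj g
  rw [image_exp_Ioi hl] at key
  refine Eq.trans ?_ key.symm
  apply setIntegral_congr_fun measurableSet_Ioi
  intro x hx
  have hx0 : (0:ℝ) < x := hx
  beta_reduce
  set E := Real.exp (-(l * x)) with hE
  have hE0 : 0 < E := Real.exp_pos _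
  have hE1 : E < 1 := by
    rw [hE, ← Real.exp_zero]
    exact Real.exp_lt_exp.2 (by nlinarith)
  have h1E : 0 < 1 - E := by linarith
  have habs : |E * -l| = E * l := by
    rw [abs_of_nonpos (by nlinarith)]; ring
  simp only [smul_eq_mul, habs, hg]
  have hdens : geDensity l v x ^ (1 + a) =
      l ^ (1 + a) * v ^ (1 + a) * E ^ (1 + a) * (1 - E) ^ ((v - 1) * (1 + a)) := by
    rw [geDensity]
    rw [show l * v * E * (1 - E) ^ (v - 1) = (l * v * E) * (1 - E) ^ (v - 1) by ring]
    rw [Real.mul_rpow (by positivity) (Real.rpow_nonneg h1E.le _),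
      Real.mul_rpow (by positivity) hE0.le,
      Real.mul_rpow hl.le (by linarith : (0:ℝ) ≤ v),
      ← Real.rpow_mul h1E.le]
  rw [hdens, geScoreShape]
  rw [Real.rpow_add hl 1 a, Real.rpow_one, Real.rpow_add hE0 1 a, Real.rpow_one,
    show (1 + a) - 1 = a by ring, show ((1 + a) * (v - 1) + 1) - 1 = (v - 1) * (1 + a) by ring]
  ring


/-- For `α ≥ 0`, `λ > 0` and `ν > 1`,
`∫₀^∞ u_ν(x)² f(x; λ, ν)^(1+α) dx = λ^α ν^(α−1) B(1+α, (1+α)(ν−1)+1) ×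
  { ν² (ψ'((1+α)(ν−1)+1) − ψ'(ν(1+α)+1)) + (1 + ν (ψ((1+α)(ν−1)+1) − ψ(ν(1+α)+1)))² }`. -/
theorem ge_weighted_score_shape_sq_integral (a l v : ℝ) (ha : 0 ≤ a) (hl : 0 < l)
    (hv : 1 < v) :
    ∫ x in Ioi (0 : ℝ), geScoreShape l v x ^ 2 * geDensity l v x ^ (1 + a) =
      l ^ a * v ^ (a - 1) * realBeta (1 + a) ((1 + a) * (v - 1) + 1) *
        (v ^ 2 * (trigamma ((1 + a) * (v - 1) + 1) - trigamma (v * (1 + a) + 1)) +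
          (1 + v * (digamma ((1 + a) * (v - 1) + 1) - digamma (v * (1 + a) + 1))) ^ 2) := by
  have hv0 : (0:ℝ) < v := by linarith
  set p : ℝ := 1 + a with hpdef
  set Q : ℝ := (1 + a) * (v - 1) + 1 with hQdef
  have hp : 0 < p := by rw [hpdef]; linarith
  have hQ : 0 < Q := by rw [hQdef]; nlinarith
  rw [subst_step a l v ha hl hv]
  have hsplit : ∀ u ∈ Ioo (0:ℝ) 1,
      l ^ a * v ^ (1 + a) *
      ((1/v + Real.log (1 - u)) ^ 2 * (u ^ (p - 1) * (1 - u) ^ (Q - 1))) =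
      l ^ a * v ^ (1 + a) *
      ((1/v)^2 * (u ^ (p - 1) * (1 - u) ^ (Q - 1) * Real.log (1 - u) ^ 0) +
        ((2/v) * (u ^ (p - 1) * (1 - u) ^ (Q - 1) * Real.log (1 - u) ^ 1) +
          u ^ (p - 1) * (1 - u) ^ (Q - 1) * Real.log (1 - u) ^ 2)) := by
    intro u _
    ring
  rw [show ((1 : ℝ) + a) - 1 = p - 1 by rw [hpdef], show ((1 + a) * (v - 1) + 1) - 1 = Q - 1 by rw [hQdef]]
  rw [setIntegral_congr_fun measurableSet_Ioo hsplit]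
  rw [integral_const_mul]
  have h0 := (integrable_logpow hp hQ 0).const_mul ((1/v)^2)
  have h1 := (integrable_logpow hp hQ 1).const_mul ((2:ℝ)/v)
  have h2 := integrable_logpow hp hQ 2
  have h12 : IntegrableOn (fun u : ℝ =>
      2/v * (u ^ (p - 1) * (1 - u) ^ (Q - 1) * Real.log (1 - u) ^ 1) +
      u ^ (p - 1) * (1 - u) ^ (Q - 1) * Real.log (1 - u) ^ 2) (Ioo (0:ℝ) 1) := h1.add h2
  rw [integral_add h0 h12, integral_add h1 h2,
    integral_const_mul, integral_const_mul, J0_eq hp hQ, J1_eq hp hQ, J2_eq hp hQ]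
  have hpQ : p + Q = v * (1 + a) + 1 := by rw [hpdef, hQdef]; ring
  rw [← hpQ]
  have hva : v ^ (1 + a) = v ^ (a - 1) * v ^ 2 := by
    rw [← Real.rpow_natCast v 2, ← Real.rpow_add hv0]
    norm_num
    congr 1
    ring
  rw [hva]
  have hvne : v ≠ 0 := hv0.ne'
  field_simp
  ring
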